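/- For every odd natural number n ≥ 1 and every real φ such that φ + 2πl/n is not an integer multiple of π for any l = 0,...,n−1, one has ∑_{l=0}^{n-1} csc(φ + 2πl/n) = n·csc(nφ); and for every even natural number n ≥ 2 with the same nonvanishing condition, ∑_{l=0}^{n-1} csc(φ + 2πl/n) = 0. -/

import Mathlib

open Real Finset

lemma sin_mul_aux (θ : ℂ) :
    Complex.sin θ * (2 * Complex.I * Complex.exp (θ * Complex.I)) =
      Complex.exp (θ * Complex.I) ^ 2 - 1 := by
  have h := Complex.exp_ne_zero (θ * Complex.I)
  rw [Complex.sin, neg_mul, Complex.exp_neg]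
  field_simp
  ring_nf
  simp [Complex.I_sq]

lemma denom_ne_zero (θ : ℂ) (h : Complex.sin θ ≠ 0) :
    Complex.exp (θ * Complex.I) ^ 2 - 1 ≠ 0 := by
  rw [← sin_mul_aux θ]
  exact mul_ne_zero h (by simp [Complex.exp_ne_zero, Complex.I_ne_zero])

lemma csc_formula (θ : ℂ) (h : Complex.sin θ ≠ 0) :
    (Complex.sin θ)⁻¹ =
      2 * Complex.I * Complex.exp (θ * Complex.I) / (Complex.exp (θ * Complex.I) ^ 2 - 1) := by
  have hd := denom_ne_zero θ h
  rw [eq_div_iff hd, ← sin_mul_aux θ, inv_mul_cancel_left₀ h]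

lemma key_sum (n m : ℕ) (hm : n = 2 * m + 1) (z ζ : ℂ) (hζ : IsPrimitiveRoot ζ n)
    (hd : ∀ l < n, (z * ζ ^ l) ^ 2 - 1 ≠ 0) (hzn : (z ^ n) ^ 2 - 1 ≠ 0) :
    ∑ l ∈ Finset.range n, (z * ζ ^ l) / ((z * ζ ^ l) ^ 2 - 1)
      = n * z ^ n / ((z ^ n) ^ 2 - 1) := by
  have hζn : ζ ^ n = 1 := hζ.pow_eq_one
  set S := ∑ l ∈ Finset.range n, (z * ζ ^ l) / ((z * ζ ^ l) ^ 2 - 1) with hS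
  have key : ((z ^ n) ^ 2 - 1) * S = n * z ^ n := by
    have expand : ((z ^ n) ^ 2 - 1) * S
        = ∑ l ∈ range n, ∑ k ∈ range n, z ^ (2 * k + 1) * (ζ ^ (2 * k + 1)) ^ l := by
      rw [hS, Finset.mul_sum]
      refine Finset.sum_congr rfl fun l hl => ?_
      have hdl := hd l (mem_range.mp hl)
      have hg := geom_sum_mul ((z * ζ ^ l) ^ 2) n
      have hwn : ((z * ζ ^ l) ^ 2) ^ n = (z ^ n) ^ 2 := by
        have : ((z * ζ ^ l) ^ 2) ^ n = (z ^ n) ^ 2 * ((ζ ^ n) ^ l) ^ 2 := by ring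
        rw [this, hζn]; ring
      have step : ((z ^ n) ^ 2 - 1) * ((z * ζ ^ l) / ((z * ζ ^ l) ^ 2 - 1))
          = (z * ζ ^ l) * ∑ k ∈ range n, ((z * ζ ^ l) ^ 2) ^ k := by
        rw [mul_div_assoc', div_eq_iff hdl]
        linear_combination (-(z * ζ ^ l)) * hg - (z * ζ ^ l) * hwn
      rw [step, Finset.mul_sum]
      refine Finset.sum_congr rfl fun k _ => ?_
      ring
    rw [expand, Finset.sum_comm]
    have inner : ∀ k ∈ range n, ∑ l ∈ range n, z ^ (2 * k + 1) * (ζ ^ (2 * k + 1)) ^ l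
        = if k = m then (n : ℂ) * z ^ n else 0 := by
      intro k hk
      rw [← Finset.mul_sum]
      by_cases hkm : k = m
      · subst hkm
        have : 2 * k + 1 = n := by omega
        rw [if_pos rfl, this, hζn]
        simp [mul_comm]
      · rw [if_neg hkm]
        have hne : ζ ^ (2 * k + 1) ≠ 1 := by
          intro h1
          rw [hζ.pow_eq_one_iff_dvd] at h1
          obtain ⟨c, hc⟩ := h1
          have hk' : k < n := mem_range.mp hk
          have hc2 : c < 2 := by
            by_contra hc2
            push_neg at hc2
            have : n * 2 ≤ n * c := Nat.mul_le_mul_left n hc2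
            omega
          interval_cases c <;> omega
        have := geom_sum_mul (ζ ^ (2 * k + 1)) n
        have h2 : (ζ ^ (2 * k + 1)) ^ n = 1 := by
          have : (ζ ^ (2 * k + 1)) ^ n = (ζ ^ n) ^ (2 * k + 1) := by ring
          rw [this, hζn, one_pow]
        rw [h2] at this
        simp only [sub_self] at this
        rcases mul_eq_zero.mp this with h3 | h3
        · rw [h3, mul_zero]
        · exact absurd (by linear_combination h3) hne
    rw [Finset.sum_congr rfl inner, Finset.sum_ite_eq' (range n) m (fun _ => (n:ℂ) * z ^ n)]
    rw [if_pos (mem_range.mpr (by omega))]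
  rw [eq_div_iff hzn]
  linear_combination key

theorem csc_sum_two_pi (n : ℕ) (hn : 1 ≤ n) (φ : ℝ)
    (h : ∀ l < n, ∀ k : ℤ, φ + 2 * π * l / n ≠ k * π) :
    (Odd n → ∑ l ∈ Finset.range n, (Real.sin (φ + 2 * π * l / n))⁻¹ =
      n * (Real.sin (n * φ))⁻¹) ∧
    (Even n → 2 ≤ n → ∑ l ∈ Finset.range n, (Real.sin (φ + 2 * π * l / n))⁻¹ = 0) := by
  have hn0 : (n : ℝ) ≠ 0 := Nat.cast_ne_zero.mpr (by omega)
  constructor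
  · rintro ⟨m, hm⟩
    have hsins : ∀ l < n, Real.sin (φ + 2 * π * l / n) ≠ 0 := by
      intro l hl hsin
      rw [Real.sin_eq_zero_iff] at hsin
      obtain ⟨k, hk⟩ := hsin
      exact h l hl k hk.symm
    have hsinn : Real.sin (n * φ) ≠ 0 := by
      intro hsin
      rw [Real.sin_eq_zero_iff] at hsin
      obtain ⟨k, hk⟩ := hsin
      set l0 : ℤ := (-k * (m + 1)) % n with hl0
      have hnZ : (0 : ℤ) < n := by exact_mod_cast Nat.pos_of_ne_zero (by omega)
      have h0 : 0 ≤ l0 := Int.emod_nonneg _ (by omega)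
      have h1 : l0 < n := Int.emod_lt_of_pos _ hnZ
      have hn' : (n : ℤ) = 2 * m + 1 := by exact_mod_cast hm
      have hdvd : (n : ℤ) ∣ k + 2 * l0 := by
        refine ⟨-k - 2 * ((-k * (m + 1)) / n), ?_⟩
        have he : l0 = -k * (m + 1) - n * ((-k * (m + 1)) / n) := by
          rw [hl0, Int.emod_def]
        rw [he]
        linear_combination (k : ℤ) * hn'
      obtain ⟨c, hc⟩ := hdvd
      apply h l0.toNat (by omega) c
      have hcast : ((l0.toNat : ℕ) : ℝ) = (l0 : ℝ) := by exact_mod_cast Int.toNat_of_nonneg h0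
      have hkR : (k : ℝ) * π = (n : ℝ) * φ := by exact_mod_cast hk
      have hcR : (k : ℝ) + 2 * (l0 : ℝ) = (n : ℝ) * c := by exact_mod_cast hc
      rw [hcast]
      field_simp
      linear_combination -hkR + π * hcR
    -- complex side
    set ζ : ℂ := Complex.exp (2 * (π : ℂ) * Complex.I / n) with hζdef
    set z : ℂ := Complex.exp ((φ : ℂ) * Complex.I) with hzdef
    have hζ : IsPrimitiveRoot ζ n := Complex.isPrimitiveRoot_exp n (by omega)
    have hnC : (n : ℂ) ≠ 0 := Nat.cast_ne_zero.mpr (by omega)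
    have hexp : ∀ l : ℕ, Complex.exp (((φ + 2 * π * (l : ℝ) / n : ℝ) : ℂ) * Complex.I)
        = z * ζ ^ l := by
      intro l
      rw [hζdef, hzdef, ← Complex.exp_nat_mul, ← Complex.exp_add]
      congr 1
      push_cast
      field_simp
    have hexpn : Complex.exp ((((n : ℝ) * φ : ℝ) : ℂ) * Complex.I) = z ^ n := by
      rw [hzdef, ← Complex.exp_nat_mul]
      congr 1
      push_cast
      ring
    have hd : ∀ l < n, (z * ζ ^ l) ^ 2 - 1 ≠ 0 := by
      intro l hl
      rw [← hexp l]
      refine denom_ne_zero _ ?_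
      rw [← Complex.ofReal_sin]
      exact_mod_cast hsins l hl
    have hzn : (z ^ n) ^ 2 - 1 ≠ 0 := by
      rw [← hexpn]
      refine denom_ne_zero _ ?_
      rw [← Complex.ofReal_sin]
      exact_mod_cast hsinn
    have hgoal : ∑ l ∈ Finset.range n, ((Real.sin (φ + 2 * π * l / n) : ℂ))⁻¹
        = (n : ℂ) * ((Real.sin (n * φ) : ℂ))⁻¹ := by
      have lhs : ∀ l ∈ Finset.range n, ((Real.sin (φ + 2 * π * l / n) : ℂ))⁻¹
          = 2 * Complex.I * ((z * ζ ^ l) / ((z * ζ ^ l) ^ 2 - 1)) := by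
        intro l hl
        rw [Complex.ofReal_sin,
          csc_formula _ (by rw [← Complex.ofReal_sin]; exact_mod_cast hsins l (mem_range.mp hl)),
          hexp l, mul_div_assoc]
      rw [Finset.sum_congr rfl lhs, ← Finset.mul_sum, key_sum n m hm z ζ hζ hd hzn,
        Complex.ofReal_sin,
        csc_formula _ (by rw [← Complex.ofReal_sin]; exact_mod_cast hsinn), hexpn]
      ring
    exact_mod_cast hgoal
  · rintro ⟨m, hm⟩ h2
    subst hm
    have hm1 : 1 ≤ m := by omega
    have hmR : (m : ℝ) ≠ 0 := Nat.cast_ne_zero.mpr (by omega)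
    rw [Finset.sum_range_add]
    have neg : ∀ l ∈ Finset.range m,
        (Real.sin (φ + 2 * π * ((m + l : ℕ) : ℝ) / ((m + m : ℕ) : ℝ)))⁻¹
        = -(Real.sin (φ + 2 * π * (l : ℝ) / ((m + m : ℕ) : ℝ)))⁻¹ := by
      intro l hl
      have hang : φ + 2 * π * ((m + l : ℕ) : ℝ) / ((m + m : ℕ) : ℝ)
          = (φ + 2 * π * (l : ℝ) / ((m + m : ℕ) : ℝ)) + π := by
        push_cast
        field_simp
        ring
      rw [hang, Real.sin_add_pi, inv_neg]
    rw [Finset.sum_congr rfl neg, Finset.sum_neg_distrib]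
    ring
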